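/- If v(r,t) is a radial solution of ∂²_t v - (Δ_{ℍ³}+1)v = |v|⁴v, then u(r,t) = (sinh r / r) v(r,t) solves ∂²_t u - Δ_{ℝ³} u = φ(x)|u|⁴u with φ(x) = |x|⁴/sinh⁴|x|, and the energies agree: ∫_{ℍ³}(½|∇v|² - ½|v|² + ½|∂_t v|² - (1/6)|v|⁶)dμ = ∫_{ℝ³}(½|∇u|² + ½|∂_t u|² - (φ/6)|u|⁶)dx. -/

import Mathlib

open Real MeasureTheory Set
open Filter

noncomputable def myQ : ℝ → ℝ := fun x => if x = 0 then 1 else Real.sinh x / x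

lemma myQ_at {x : ℝ} (hx : x ≠ 0) : myQ x = Real.sinh x / x := if_neg hx

@[fun_prop] lemma myQ_cont : Continuous myQ := by
  rw [continuous_iff_continuousAt]
  intro x
  by_cases hx : x = 0
  · subst hx
    have h1 : Tendsto (fun r : ℝ => Real.sinh r / r) (nhdsWithin 0 {(0:ℝ)}ᶜ) (nhds 1) := by
      have h := hasDerivAt_iff_tendsto_slope.mp (Real.hasDerivAt_sinh 0)
      rw [Real.cosh_zero] at h
      refine h.congr ?_
      intro r
      simp [slope_def_field]
    rw [ContinuousAt]
    have : myQ 0 = 1 := by simp [myQ]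
    rw [this, ← nhdsNE_sup_pure]
    rw [Filter.tendsto_sup]
    constructor
    · refine h1.congr' ?_
      filter_upwards [self_mem_nhdsWithin] with r hr
      simp only [Set.mem_compl_iff, Set.mem_singleton_iff] at hr
      simp [myQ, hr]
    · rw [Filter.tendsto_pure_left]
      intro s hs
      simpa [myQ] using mem_of_mem_nhds hs
  · have h2 : ContinuousAt (fun r : ℝ => Real.sinh r / r) x :=
      (Real.continuous_sinh.continuousAt).div continuousAt_id hx
    refine h2.congr ?_
    filter_upwards [isOpen_compl_singleton.mem_nhds (by simpa using hx : x ∈ ({(0:ℝ)}ᶜ : Set ℝ))] with r hr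
    simp only [Set.mem_compl_iff, Set.mem_singleton_iff] at hr
    simp [myQ, hr]

lemma hasDerivAt_sinh_div_mul (V : ℝ → ℝ) (hV : Differentiable ℝ V) {r : ℝ} (hr : 0 < r) :
    HasDerivAt (fun ρ => Real.sinh ρ / ρ * V ρ)
      ((Real.cosh r * r - Real.sinh r * 1) / r ^ 2 * V r + Real.sinh r / r * deriv V r) r :=
  (((Real.hasDerivAt_sinh r).div (hasDerivAt_id r) hr.ne')).mul (hV r).hasDerivAt

lemma deriv_sinh_div_mul (V : ℝ → ℝ) (hV : Differentiable ℝ V) {r : ℝ} (hr : 0 < r) :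
    deriv (fun ρ => Real.sinh ρ / ρ * V ρ) r
      = (Real.cosh r * r - Real.sinh r * 1) / r ^ 2 * V r + Real.sinh r / r * deriv V r :=
  (hasDerivAt_sinh_div_mul V hV hr).deriv

lemma deriv2_sinh_div_mul (V : ℝ → ℝ) (hV : ContDiff ℝ (⊤ : ℕ∞) V) {r : ℝ} (hr : 0 < r) :
    deriv (deriv (fun ρ => Real.sinh ρ / ρ * V ρ)) r
      = (Real.sinh r / r - 2 * Real.cosh r / r ^ 2 + 2 * Real.sinh r / r ^ 3) * V r
        + 2 * ((Real.cosh r * r - Real.sinh r) / r ^ 2) * deriv V r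
        + Real.sinh r / r * deriv (deriv V) r := by
  have hV' : ContDiff ℝ ((⊤:ℕ∞) : WithTop ℕ∞) (deriv V) := (contDiff_infty_iff_deriv.mp hV).2
  have hVd : Differentiable ℝ V := hV.differentiable (by simp)
  have hV'd : Differentiable ℝ (deriv V) := hV'.differentiable (by simp)
  have heq : deriv (fun ρ => Real.sinh ρ / ρ * V ρ)
      =ᶠ[nhds r] fun ρ => (Real.cosh ρ * ρ - Real.sinh ρ * 1) / ρ ^ 2 * V ρ
        + Real.sinh ρ / ρ * deriv V ρ := by
    filter_upwards [isOpen_Ioi.mem_nhds hr] with x hx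
    exact deriv_sinh_div_mul V hVd hx
  rw [heq.deriv_eq]
  have a1 := ((((Real.hasDerivAt_cosh r).mul (hasDerivAt_id' r)).sub
      ((Real.hasDerivAt_sinh r).mul (hasDerivAt_const r (1 : ℝ)))).div
      (hasDerivAt_pow 2 r) (pow_ne_zero 2 hr.ne')).mul (hVd r).hasDerivAt
  have a3 := ((Real.hasDerivAt_sinh r).div (hasDerivAt_id' r) hr.ne').mul (hV'd r).hasDerivAt
  have a4 := a1.add a3
  refine a4.deriv.trans ?_
  simp only [Pi.add_apply, Pi.mul_apply, Pi.sub_apply, Pi.div_apply]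
  have hs : Real.sinh r ≠ 0 := (Real.sinh_pos_iff.mpr hr).ne'
  field_simp
  ring

lemma deriv2_const_mul_field (c : ℝ) (W : ℝ → ℝ) (t : ℝ) :
    deriv (deriv (fun s => c * W s)) t = c * deriv (deriv W) t := by
  have h : deriv (fun s => c * W s) = fun s => c * deriv W s :=
    funext fun s => deriv_const_mul_field c
  rw [h]
  exact deriv_const_mul_field c

/-- The exact divergence term. -/
noncomputable def myH (V : ℝ → ℝ) : ℝ → ℝ := fun x =>
  (Real.cosh x ^ 2 + Real.sinh x ^ 2) * V x ^ 2
    + 2 * Real.sinh x * Real.cosh x * V x * deriv V x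
    - 2 * myQ x * Real.cosh x * V x ^ 2
    - 2 * myQ x * Real.sinh x * V x * deriv V x
    + myQ x ^ 2 * V x ^ 2

noncomputable def myG (V : ℝ → ℝ) : ℝ → ℝ := fun x =>
  Real.sinh x * Real.cosh x * V x ^ 2 - myQ x * Real.sinh x * V x ^ 2

lemma myH_key (V : ℝ → ℝ) (hV : ContDiff ℝ (⊤ : ℕ∞) V) (hVs : HasCompactSupport V) :
    IntegrableOn (myH V) (Ioi (0 : ℝ)) ∧ (∫ r in Ioi (0 : ℝ), myH V r) = 0 := by
  have hVd : Differentiable ℝ V := hV.differentiable (by simp)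
  have hV' : ContDiff ℝ ((⊤:ℕ∞) : WithTop ℕ∞) (deriv V) := (contDiff_infty_iff_deriv.mp hV).2
  have hVc : Continuous V := hV.continuous
  have hV'c : Continuous (deriv V) := hV'.continuous
  -- continuity of H
  have hHc : Continuous (myH V) := by
    unfold myH
    fun_prop
  -- compact support of H
  have hHs : HasCompactSupport (myH V) := by
    apply hVs.mono
    intro x hx
    simp only [Function.mem_support] at hx ⊢
    intro h0
    apply hx
    simp [myH, h0]
  have hHint : IntegrableOn (myH V) (Ioi (0 : ℝ)) :=
    (hHc.integrable_of_hasCompactSupport hHs).integrableOn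
  refine ⟨hHint, ?_⟩
  -- G is continuous
  have hGc : Continuous (myG V) := by
    unfold myG
    fun_prop
  -- G has derivative H on Ioi 0
  have hGd : ∀ x ∈ Ioi (0 : ℝ), HasDerivAt (myG V) (myH V x) x := by
    intro x hx
    have hx0 : (0 : ℝ) < x := hx
    have hs : Real.sinh x ≠ 0 := (Real.sinh_pos_iff.mpr hx0).ne'
    have t1 := ((Real.hasDerivAt_sinh x).mul (Real.hasDerivAt_cosh x)).mul
      ((hVd x).hasDerivAt.pow 2)
    have t2 := (((Real.hasDerivAt_sinh x).pow 2).div (hasDerivAt_id' (x := x)) hx0.ne').mul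
      ((hVd x).hasDerivAt.pow 2)
    have t3 := t1.sub t2
    have heq : myG V =ᶠ[nhds x]
        fun y => Real.sinh y * Real.cosh y * V y ^ 2 - Real.sinh y ^ 2 / y * V y ^ 2 := by
      filter_upwards [isOpen_Ioi.mem_nhds hx0] with y hy
      have hy0 : (y : ℝ) ≠ 0 := (Set.mem_Ioi.mp hy).ne'
      simp only [myG, myQ_at hy0]
      ring
    have t4 := t3.congr_of_eventuallyEq heq
    refine t4.congr_deriv ?_
    simp only [myH, myQ_at hx0.ne', Pi.mul_apply, Pi.pow_apply, Pi.div_apply]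
    field_simp
    ring
  -- G tends to 0 at infinity
  have hgt : Tendsto (myG V) atTop (nhds 0) := by
    obtain ⟨R, hR⟩ := hVs.isCompact.bddAbove
    have hev : myG V =ᶠ[atTop] fun _ => (0 : ℝ) := by
      filter_upwards [eventually_gt_atTop R] with y hy
      have hVy : V y = 0 := by
        by_contra h
        exact absurd (hR (subset_tsupport V h)) (not_le.mpr hy)
      simp [myG, hVy]
    exact Tendsto.congr' hev.symm tendsto_const_nhds
  have hG0 : myG V 0 = 0 := by simp [myG]
  have := integral_Ioi_of_hasDerivAt_of_tendsto
    (hGc.continuousWithinAt) hGd hHint hgt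
  rw [this, hG0, sub_zero]

lemma energy_pointwise (V : ℝ → ℝ) (hV : Differentiable ℝ V) {r : ℝ} (hr : 0 < r) (T : ℝ) :
    ((1:ℝ)/2 * (deriv (fun ρ => Real.sinh ρ / ρ * V ρ) r)^2
      + (1:ℝ)/2 * (Real.sinh r / r * T)^2
      - r^4 / Real.sinh r^4 / 6 * (Real.sinh r / r * V r)^6) * r^2
    = ((1:ℝ)/2 * (deriv V r)^2 - (1:ℝ)/2 * (V r)^2 + (1:ℝ)/2 * T^2 - (1:ℝ)/6 * (V r)^6)
        * Real.sinh r^2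
      + (1/2) * myH V r := by
  have hs : Real.sinh r ≠ 0 := (Real.sinh_pos_iff.mpr hr).ne'
  rw [deriv_sinh_div_mul V hV hr]
  simp only [myH, myQ_at hr.ne']
  field_simp
  ring

lemma integral_eq_of_add (f h : ℝ → ℝ) (hh : IntegrableOn h (Ioi (0:ℝ)))
    (h0 : (∫ r in Ioi (0:ℝ), h r) = 0) :
    (∫ r in Ioi (0:ℝ), (f r + h r)) = ∫ r in Ioi (0:ℝ), f r := by
  by_cases hf : IntegrableOn f (Ioi (0:ℝ))
  · rw [integral_add hf hh, h0, add_zero]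
  · rw [integral_undef hf, integral_undef]
    intro hc
    apply hf
    have h2 := hc.sub hh
    have h3 : ((fun r => f r + h r) - h) = f := by funext r; simp
    rwa [h3] at h2

/-- if `v(r,t)` is a radial solution of
`∂²_t v - (Δ_{ℍ³} + 1) v = |v|⁴ v`, then `u(r,t) = (sinh r / r) v(r,t)` solves
`∂²_t u - Δ_{ℝ³} u = φ |u|⁴ u` with `φ = r⁴/sinh⁴ r`, and the energies agree:
`∫_{ℍ³} (½|∇v|² - ½|v|² + ½|∂_t v|² - |v|⁶/6) dμ
  = ∫_{ℝ³} (½|∇u|² + ½|∂_t u|² - φ|u|⁶/6) dx`,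
written radially with weights `sinh² r` and `r²` respectively. -/
theorem stmt_19 (I : Set ℝ) (v u : ℝ → ℝ → ℝ)
    (hsmooth : ContDiff ℝ (⊤ : ℕ∞) (fun p : ℝ × ℝ => v p.1 p.2))
    (hsupp : ∀ t, HasCompactSupport (fun r => v r t))
    (hu : ∀ r t, u r t = Real.sinh r / r * v r t)
    -- `v` solves the radial shifted wave equation `∂²_t v = Δ_{ℍ³}v + v + |v|⁴v`:
    (hPDE : ∀ t ∈ I, ∀ r : ℝ, 0 < r →
      deriv (deriv (fun s => v r s)) t
        = deriv (deriv (fun ρ => v ρ t)) r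
          + 2 * (Real.cosh r / Real.sinh r) * deriv (fun ρ => v ρ t) r
          + v r t + |v r t| ^ 4 * v r t) :
    -- `u` solves `∂²_t u = Δ_{ℝ³}u + φ |u|⁴ u` with `φ(r) = r⁴/sinh⁴ r`:
    (∀ t ∈ I, ∀ r : ℝ, 0 < r →
      deriv (deriv (fun s => u r s)) t
        = deriv (deriv (fun ρ => u ρ t)) r + 2 / r * deriv (fun ρ => u ρ t) r
          + r ^ 4 / (Real.sinh r) ^ 4 * |u r t| ^ 4 * u r t) ∧
    -- the energies agree:
    (∀ t ∈ I,
      (∫ r in Ioi (0 : ℝ),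
        ((1 : ℝ) / 2 * (deriv (fun ρ => v ρ t) r) ^ 2 - (1 : ℝ) / 2 * (v r t) ^ 2
          + (1 : ℝ) / 2 * (deriv (fun s => v r s) t) ^ 2
          - (1 : ℝ) / 6 * (v r t) ^ 6) * (Real.sinh r) ^ 2)
      = ∫ r in Ioi (0 : ℝ),
        ((1 : ℝ) / 2 * (deriv (fun ρ => u ρ t) r) ^ 2
          + (1 : ℝ) / 2 * (deriv (fun s => u r s) t) ^ 2
          - r ^ 4 / (Real.sinh r) ^ 4 / 6 * (u r t) ^ 6) * r ^ 2) := by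
  constructor
  · -- the PDE
    intro t ht r hr
    have hVt : ContDiff ℝ (⊤ : ℕ∞) (fun ρ => v ρ t) :=
      hsmooth.comp (contDiff_id.prodMk contDiff_const)
    have hUr : (fun ρ => u ρ t) = fun ρ => Real.sinh ρ / ρ * v ρ t :=
      funext fun ρ => hu ρ t
    have hUt : (fun s => u r s) = fun s => Real.sinh r / r * v r s :=
      funext fun s => hu r s
    have hs : Real.sinh r ≠ 0 := (Real.sinh_pos_iff.mpr hr).ne'
    rw [hUt, deriv2_const_mul_field, hPDE t ht r hr, hUr,
        deriv2_sinh_div_mul _ hVt hr,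
        deriv_sinh_div_mul _ (hVt.differentiable (by simp)) hr, hu r t,
        abs_mul, abs_div, abs_of_pos (Real.sinh_pos_iff.mpr hr), abs_of_pos hr]
    field_simp
    ring
  · -- the energies agree
    intro t _
    have hVt : ContDiff ℝ (⊤ : ℕ∞) (fun ρ => v ρ t) :=
      hsmooth.comp (contDiff_id.prodMk contDiff_const)
    have hVd : Differentiable ℝ (fun ρ => v ρ t) := hVt.differentiable (by simp)
    obtain ⟨hint, hzero⟩ := myH_key _ hVt (hsupp t)
    symm
    have step1 : (∫ r in Ioi (0 : ℝ),
        ((1 : ℝ) / 2 * (deriv (fun ρ => u ρ t) r) ^ 2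
          + (1 : ℝ) / 2 * (deriv (fun s => u r s) t) ^ 2
          - r ^ 4 / (Real.sinh r) ^ 4 / 6 * (u r t) ^ 6) * r ^ 2)
        = ∫ r in Ioi (0 : ℝ),
          ((((1 : ℝ) / 2 * (deriv (fun ρ => v ρ t) r) ^ 2 - (1 : ℝ) / 2 * (v r t) ^ 2
            + (1 : ℝ) / 2 * (deriv (fun s => v r s) t) ^ 2
            - (1 : ℝ) / 6 * (v r t) ^ 6) * (Real.sinh r) ^ 2)
            + (1 / 2) * myH (fun ρ => v ρ t) r) := by
      apply setIntegral_congr_fun measurableSet_Ioi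
      intro r hr
      beta_reduce
      have hr0 : (0 : ℝ) < r := hr
      have hUr : (fun ρ => u ρ t) = fun ρ => Real.sinh ρ / ρ * v ρ t :=
        funext fun ρ => hu ρ t
      have hut : deriv (fun s => u r s) t = Real.sinh r / r * deriv (fun s => v r s) t := by
        rw [show (fun s => u r s) = fun s => Real.sinh r / r * v r s from
          funext fun s => hu r s]
        exact deriv_const_mul_field _
      rw [hUr, hut, hu r t]
      exact energy_pointwise _ hVd hr0 (deriv (fun s => v r s) t)
    rw [step1]
    apply integral_eq_of_add
    · exact hint.const_mul _
    · rw [MeasureTheory.integral_const_mul, hzero, mul_zero]
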